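/- No entanglement swapping in box world: let P(a,b₁|x,y₁) and Q(b₂,c|y₂,z) be no-signalling states (Alice–Bob₁ and Bob₂–Charlie respectively), and let R be a nonnegative array R(b₁,b₂|y₁,y₂) (an effect for Bob's joint measurement outcome). Define the joint probability Pr(a,c|x,z) = ∑_{b₁,y₁,b₂,y₂} R(b₁b₂|y₁y₂) P(a,b₁|x,y₁) Q(b₂,c|y₂,z), and assume it is not identically zero. Then the normalized conditional state P_r(a,c|x,z) = Pr(a,c|x,z) / ∑_{a,c} Pr(a,c|x,z) is separable: it is a convex combination of products of collapsed states P_{b₁y₁}(a|x) = P(a,b₁|x,y₁)/∑_a P(a,b₁|x,y₁) and Q_{b₂y₂}(c|z) = Q(b₂,c|y₂,z)/∑_c Q(b₂,c|y₂,z). -/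

import Mathlib

section

variable {A X B₁ Y₁ B₂ Y₂ C Z : Type*}
  [Fintype A] [Fintype X] [Fintype B₁] [Fintype Y₁]
  [Fintype B₂] [Fintype Y₂] [Fintype C] [Fintype Z]

private lemma sum_push4 {α β₁ β₂ β₃ β₄ : Type*} [Fintype α] [Fintype β₁]
    [Fintype β₂] [Fintype β₃] [Fintype β₄]
    (f : α → β₁ → β₂ → β₃ → β₄ → ℝ) :
    ∑ a, ∑ b₁, ∑ b₂, ∑ b₃, ∑ b₄, f a b₁ b₂ b₃ b₄
      = ∑ b₁, ∑ b₂, ∑ b₃, ∑ b₄, ∑ a, f a b₁ b₂ b₃ b₄ := by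
  rw [Finset.sum_comm]
  refine Finset.sum_congr rfl fun b₁ _ => ?_
  rw [Finset.sum_comm]
  refine Finset.sum_congr rfl fun b₂ _ => ?_
  rw [Finset.sum_comm]
  refine Finset.sum_congr rfl fun b₃ _ => ?_
  rw [Finset.sum_comm]

private lemma sum_prod_out {α β : Type*} [Fintype α] [Fintype β]
    (r : ℝ) (f : α → ℝ) (g : β → ℝ) :
    ∑ a, ∑ b, r * f a * g b = r * (∑ a, f a) * (∑ b, g b) := by
  rw [Finset.mul_sum, Finset.sum_comm]
  exact Finset.sum_congr rfl fun b _ => by rw [Finset.mul_sum, Finset.sum_mul]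

/-- The joint probability of Alice's and Charlie's outcomes, given outcome
effect `R` for Bob's joint measurement. -/
noncomputable def swapProb (R : B₁ → B₂ → Y₁ → Y₂ → ℝ)
    (P : A → B₁ → X → Y₁ → ℝ) (Q : B₂ → C → Y₂ → Z → ℝ)
    (a : A) (c : C) (x : X) (z : Z) : ℝ :=
  ∑ b₁, ∑ y₁, ∑ b₂, ∑ y₂, R b₁ b₂ y₁ y₂ * P a b₁ x y₁ * Q b₂ c y₂ z

/-- No entanglement swapping in box world: whatever outcome effect `R` (a
nonnegative array) Bob's measurement produces, the resulting conditional state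
of Alice and Charlie is separable: a convex combination of products of valid
single-system (collapsed) states. -/
theorem no_entanglement_swapping
    (P : A → B₁ → X → Y₁ → ℝ) (Q : B₂ → C → Y₂ → Z → ℝ)
    (R : B₁ → B₂ → Y₁ → Y₂ → ℝ)
    (hPpos : ∀ a b₁ x y₁, 0 ≤ P a b₁ x y₁)
    (hPnorm : ∀ x y₁, ∑ a, ∑ b₁, P a b₁ x y₁ = 1)
    (hPNS1 : ∀ a x y₁ y₁', ∑ b₁, P a b₁ x y₁ = ∑ b₁, P a b₁ x y₁')
    (hPNS2 : ∀ b₁ x x' y₁, ∑ a, P a b₁ x y₁ = ∑ a, P a b₁ x' y₁)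
    (hQpos : ∀ b₂ c y₂ z, 0 ≤ Q b₂ c y₂ z)
    (hQnorm : ∀ y₂ z, ∑ b₂, ∑ c, Q b₂ c y₂ z = 1)
    (hQNS1 : ∀ b₂ y₂ z z', ∑ c, Q b₂ c y₂ z = ∑ c, Q b₂ c y₂ z')
    (hQNS2 : ∀ c y₂ y₂' z, ∑ b₂, Q b₂ c y₂ z = ∑ b₂, Q b₂ c y₂' z)
    (hRpos : ∀ b₁ b₂ y₁ y₂, 0 ≤ R b₁ b₂ y₁ y₂)
    (hnonzero : ¬ ∀ a c x z, swapProb R P Q a c x z = 0) :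
    ∃ (n : ℕ) (lam : Fin n → ℝ)
      (S₁ : Fin n → A → X → ℝ) (S₂ : Fin n → C → Z → ℝ),
      (∀ i, 0 ≤ lam i) ∧ (∑ i, lam i = 1) ∧
      (∀ i a x, 0 ≤ S₁ i a x) ∧ (∀ i x, ∑ a, S₁ i a x = 1) ∧
      (∀ i c z, 0 ≤ S₂ i c z) ∧ (∀ i z, ∑ c, S₂ i c z = 1) ∧
      (∀ a c x z,
        swapProb R P Q a c x z / (∑ a', ∑ c', swapProb R P Q a' c' x z)
          = ∑ i, lam i * (S₁ i a x * S₂ i c z)) := by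
  classical
  push_neg at hnonzero
  obtain ⟨a₀, c₀, x₀, z₀, h0⟩ := hnonzero
  have hAne : Nonempty A := ⟨a₀⟩
  have hCne : Nonempty C := ⟨c₀⟩
  have hcardA : (0 : ℝ) < (Fintype.card A : ℝ) := by exact_mod_cast Fintype.card_pos
  have hcardC : (0 : ℝ) < (Fintype.card C : ℝ) := by exact_mod_cast Fintype.card_pos
  -- nonnegativity of swapProb
  have hspos : ∀ a c x z, 0 ≤ swapProb R P Q a c x z := by
    intro a c x z
    refine Finset.sum_nonneg fun b₁ _ => Finset.sum_nonneg fun y₁ _ =>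
      Finset.sum_nonneg fun b₂ _ => Finset.sum_nonneg fun y₂ _ => ?_
    exact mul_nonneg (mul_nonneg (hRpos _ _ _ _) (hPpos _ _ _ _)) (hQpos _ _ _ _)
  -- marginals
  set p : B₁ → Y₁ → ℝ := fun b₁ y₁ => ∑ a, P a b₁ x₀ y₁ with hp
  set q : B₂ → Y₂ → ℝ := fun b₂ y₂ => ∑ c, Q b₂ c y₂ z₀ with hq
  have hppos : ∀ b₁ y₁, 0 ≤ p b₁ y₁ :=
    fun b₁ y₁ => Finset.sum_nonneg fun a _ => hPpos a b₁ x₀ y₁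
  have hqpos : ∀ b₂ y₂, 0 ≤ q b₂ y₂ :=
    fun b₂ y₂ => Finset.sum_nonneg fun c _ => hQpos b₂ c y₂ z₀
  have hPsum : ∀ b₁ x y₁, ∑ a, P a b₁ x y₁ = p b₁ y₁ :=
    fun b₁ x y₁ => hPNS2 b₁ x x₀ y₁
  have hQsum : ∀ b₂ y₂ z, ∑ c, Q b₂ c y₂ z = q b₂ y₂ :=
    fun b₂ y₂ z => hQNS1 b₂ y₂ z z₀
  have hPz : ∀ b₁ y₁, p b₁ y₁ = 0 → ∀ a x, P a b₁ x y₁ = 0 := by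
    intro b₁ y₁ h a x
    have h' : ∑ a', P a' b₁ x y₁ = 0 := (hPsum b₁ x y₁).trans h
    exact (Finset.sum_eq_zero_iff_of_nonneg fun a' _ => hPpos a' b₁ x y₁).1 h' a
      (Finset.mem_univ a)
  have hQz : ∀ b₂ y₂, q b₂ y₂ = 0 → ∀ c z, Q b₂ c y₂ z = 0 := by
    intro b₂ y₂ h c z
    have h' : ∑ c', Q b₂ c' y₂ z = 0 := (hQsum b₂ y₂ z).trans h
    exact (Finset.sum_eq_zero_iff_of_nonneg fun c' _ => hQpos b₂ c' y₂ z).1 h' c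
      (Finset.mem_univ c)
  -- the normalization constant
  set N : ℝ := ∑ b₁, ∑ y₁, ∑ b₂, ∑ y₂, R b₁ b₂ y₁ y₂ * p b₁ y₁ * q b₂ y₂ with hN
  have hD : ∀ x z, (∑ a', ∑ c', swapProb R P Q a' c' x z) = N := by
    intro x z
    simp only [swapProb]
    calc ∑ a', ∑ c', ∑ b₁, ∑ y₁, ∑ b₂, ∑ y₂,
          R b₁ b₂ y₁ y₂ * P a' b₁ x y₁ * Q b₂ c' y₂ z
        = ∑ a', ∑ b₁, ∑ y₁, ∑ b₂, ∑ y₂, ∑ c',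
            R b₁ b₂ y₁ y₂ * P a' b₁ x y₁ * Q b₂ c' y₂ z :=
          Finset.sum_congr rfl fun a' _ =>
            sum_push4 (fun c' b₁ y₁ b₂ y₂ => R b₁ b₂ y₁ y₂ * P a' b₁ x y₁ * Q b₂ c' y₂ z)
      _ = ∑ b₁, ∑ y₁, ∑ b₂, ∑ y₂, ∑ a', ∑ c',
            R b₁ b₂ y₁ y₂ * P a' b₁ x y₁ * Q b₂ c' y₂ z :=
          sum_push4 (fun a' b₁ y₁ b₂ y₂ => ∑ c', R b₁ b₂ y₁ y₂ * P a' b₁ x y₁ * Q b₂ c' y₂ z)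
      _ = N := by
          refine Finset.sum_congr rfl fun b₁ _ => Finset.sum_congr rfl fun y₁ _ =>
            Finset.sum_congr rfl fun b₂ _ => Finset.sum_congr rfl fun y₂ _ => ?_
          rw [sum_prod_out (R b₁ b₂ y₁ y₂) (fun a' => P a' b₁ x y₁) (fun c' => Q b₂ c' y₂ z),
            hPsum, hQsum]
  have hNpos : 0 < N := by
    have h1 : swapProb R P Q a₀ c₀ x₀ z₀ ≤ ∑ c', swapProb R P Q a₀ c' x₀ z₀ :=
      Finset.single_le_sum (fun c' _ => hspos a₀ c' x₀ z₀) (Finset.mem_univ c₀)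
    have h2 : (∑ c', swapProb R P Q a₀ c' x₀ z₀)
        ≤ ∑ a', ∑ c', swapProb R P Q a' c' x₀ z₀ :=
      Finset.single_le_sum
        (fun a' _ => Finset.sum_nonneg fun c' _ => hspos a' c' x₀ z₀) (Finset.mem_univ a₀)
    have := lt_of_le_of_lt (le_of_eq rfl)
      (lt_of_lt_of_le ((hspos a₀ c₀ x₀ z₀).lt_of_ne (Ne.symm h0)) (h1.trans h2))
    rwa [hD x₀ z₀] at this
  have hNne : N ≠ 0 := ne_of_gt hNpos
  -- the building blocks
  set lam' : B₁ → Y₁ → B₂ → Y₂ → ℝ :=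
    fun b₁ y₁ b₂ y₂ => R b₁ b₂ y₁ y₂ * p b₁ y₁ * q b₂ y₂ / N with hlam'
  set S₁' : B₁ → Y₁ → A → X → ℝ := fun b₁ y₁ a x =>
    if p b₁ y₁ = 0 then ((Fintype.card A : ℝ))⁻¹ else P a b₁ x y₁ / p b₁ y₁ with hS₁'
  set S₂' : B₂ → Y₂ → C → Z → ℝ := fun b₂ y₂ c z =>
    if q b₂ y₂ = 0 then ((Fintype.card C : ℝ))⁻¹ else Q b₂ c y₂ z / q b₂ y₂ with hS₂'
  set e : Fin (Fintype.card (B₁ × Y₁ × B₂ × Y₂)) ≃ B₁ × Y₁ × B₂ × Y₂ :=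
    (Fintype.equivFin _).symm with he
  refine ⟨Fintype.card (B₁ × Y₁ × B₂ × Y₂),
    fun i => lam' (e i).1 (e i).2.1 (e i).2.2.1 (e i).2.2.2,
    fun i => S₁' (e i).1 (e i).2.1,
    fun i => S₂' (e i).2.2.1 (e i).2.2.2,
    ?_, ?_, ?_, ?_, ?_, ?_, ?_⟩
  · intro i
    exact div_nonneg (mul_nonneg (mul_nonneg (hRpos _ _ _ _) (hppos _ _)) (hqpos _ _))
      hNpos.le
  · rw [Fintype.sum_equiv e _
      (fun t : B₁ × Y₁ × B₂ × Y₂ => lam' t.1 t.2.1 t.2.2.1 t.2.2.2) (fun i => rfl)]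
    simp only [Fintype.sum_prod_type]
    simp only [hlam']
    simp only [← Finset.sum_div]
    rw [← hN, div_self hNne]
  · intro i a x
    simp only [hS₁']
    split
    · positivity
    · exact div_nonneg (hPpos _ _ _ _) (hppos _ _)
  · intro i x
    simp only [hS₁']
    by_cases hz : p (e i).1 (e i).2.1 = 0
    · simp [hz, Finset.card_univ, hcardA.ne']
    · simp only [hz, if_false]
      rw [← Finset.sum_div, hPsum, div_self hz]
  · intro i c z
    simp only [hS₂']
    split
    · positivity
    · exact div_nonneg (hQpos _ _ _ _) (hqpos _ _)
  · intro i z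
    simp only [hS₂']
    by_cases hz : q (e i).2.2.1 (e i).2.2.2 = 0
    · simp [hz, Finset.card_univ, hcardC.ne']
    · simp only [hz, if_false]
      rw [← Finset.sum_div, hQsum, div_self hz]
  · intro a c x z
    rw [hD x z]
    rw [Fintype.sum_equiv e _
      (fun t : B₁ × Y₁ × B₂ × Y₂ =>
        lam' t.1 t.2.1 t.2.2.1 t.2.2.2 * (S₁' t.1 t.2.1 a x * S₂' t.2.2.1 t.2.2.2 c z))
      (fun i => rfl)]
    simp only [Fintype.sum_prod_type]
    simp only [swapProb, Finset.sum_div]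
    refine Finset.sum_congr rfl fun b₁ _ => Finset.sum_congr rfl fun y₁ _ =>
      Finset.sum_congr rfl fun b₂ _ => Finset.sum_congr rfl fun y₂ _ => ?_
    simp only [hlam', hS₁', hS₂']
    by_cases hpz : p b₁ y₁ = 0
    · simp [hpz, hPz b₁ y₁ hpz a x]
    · by_cases hqz : q b₂ y₂ = 0
      · simp [hqz, hQz b₂ y₂ hqz c z]
      · rw [if_neg hpz, if_neg hqz]
        field_simp
end
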